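/- The polynomial f(β) = 310β¹⁰ − 3234β⁹ + 17112β⁸ − 49101β⁷ + 76180β⁶ − 58398β⁵ + 10056β⁴ + 15040β³ − 9680β² + 1716β − 4 has exactly one real root β_crit with β_crit > 1, and this root satisfies 1.61 < β_crit < 1.63. -/

import Mathlib

noncomputable def fKS (β : ℝ) : ℝ :=
  310*β^10 - 3234*β^9 + 17112*β^8 - 49101*β^7 + 76180*β^6 - 58398*β^5
    + 10056*β^4 + 15040*β^3 - 9680*β^2 + 1716*β - 4

lemma fKS_neg (x : ℝ) (h1 : 1 ≤ x) (h2 : x ≤ 1.61) : fKS x < 0 := by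
  unfold fKS
  rcases le_total x 1.194 with hc | hc
  · have h0 : (0:ℝ) ≤ x - 1 := by linarith
    have hh : x - 1 ≤ 0.194 := by linarith
    nlinarith [pow_nonneg h0 2, pow_nonneg h0 3, pow_nonneg h0 4, pow_nonneg h0 5,
      pow_nonneg h0 6, pow_nonneg h0 7, pow_nonneg h0 8, pow_nonneg h0 9, pow_nonneg h0 10,
      pow_le_pow_left₀ h0 hh 2, pow_le_pow_left₀ h0 hh 3, pow_le_pow_left₀ h0 hh 4,
      pow_le_pow_left₀ h0 hh 5, pow_le_pow_left₀ h0 hh 6, pow_le_pow_left₀ h0 hh 7,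
      pow_le_pow_left₀ h0 hh 8, pow_le_pow_left₀ h0 hh 9, pow_le_pow_left₀ h0 hh 10]
  rcases le_total x 1.423 with hd | hd
  · have h0 : (0:ℝ) ≤ x - 1.194 := by linarith
    have hh : x - 1.194 ≤ 0.229 := by linarith
    nlinarith [pow_nonneg h0 2, pow_nonneg h0 3, pow_nonneg h0 4, pow_nonneg h0 5,
      pow_nonneg h0 6, pow_nonneg h0 7, pow_nonneg h0 8, pow_nonneg h0 9, pow_nonneg h0 10,
      pow_le_pow_left₀ h0 hh 2, pow_le_pow_left₀ h0 hh 3, pow_le_pow_left₀ h0 hh 4,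
      pow_le_pow_left₀ h0 hh 5, pow_le_pow_left₀ h0 hh 6, pow_le_pow_left₀ h0 hh 7,
      pow_le_pow_left₀ h0 hh 8, pow_le_pow_left₀ h0 hh 9, pow_le_pow_left₀ h0 hh 10]
  rcases le_total x 1.58 with he | he
  · have h0 : (0:ℝ) ≤ x - 1.423 := by linarith
    have hh : x - 1.423 ≤ 0.157 := by linarith
    nlinarith [pow_nonneg h0 2, pow_nonneg h0 3, pow_nonneg h0 4, pow_nonneg h0 5,
      pow_nonneg h0 6, pow_nonneg h0 7, pow_nonneg h0 8, pow_nonneg h0 9, pow_nonneg h0 10,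
      pow_le_pow_left₀ h0 hh 2, pow_le_pow_left₀ h0 hh 3, pow_le_pow_left₀ h0 hh 4,
      pow_le_pow_left₀ h0 hh 5, pow_le_pow_left₀ h0 hh 6, pow_le_pow_left₀ h0 hh 7,
      pow_le_pow_left₀ h0 hh 8, pow_le_pow_left₀ h0 hh 9, pow_le_pow_left₀ h0 hh 10]
  · have h0 : (0:ℝ) ≤ x - 1.58 := by linarith
    have hh : x - 1.58 ≤ 0.03 := by linarith
    nlinarith [pow_nonneg h0 2, pow_nonneg h0 3, pow_nonneg h0 4, pow_nonneg h0 5,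
      pow_nonneg h0 6, pow_nonneg h0 7, pow_nonneg h0 8, pow_nonneg h0 9, pow_nonneg h0 10,
      pow_le_pow_left₀ h0 hh 2, pow_le_pow_left₀ h0 hh 3, pow_le_pow_left₀ h0 hh 4,
      pow_le_pow_left₀ h0 hh 5, pow_le_pow_left₀ h0 hh 6, pow_le_pow_left₀ h0 hh 7,
      pow_le_pow_left₀ h0 hh 8, pow_le_pow_left₀ h0 hh 9, pow_le_pow_left₀ h0 hh 10]

lemma fKS_pos (x : ℝ) (h1 : 1.63 ≤ x) : 0 < fKS x := by
  unfold fKS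
  have h0 : (0:ℝ) ≤ x - 1.63 := by linarith
  nlinarith [pow_nonneg h0 2, pow_nonneg h0 3, pow_nonneg h0 4, pow_nonneg h0 5,
    pow_nonneg h0 6, pow_nonneg h0 7, pow_nonneg h0 8, pow_nonneg h0 9, pow_nonneg h0 10]

lemma fKS_hasDerivAt (x : ℝ) : HasDerivAt fKS
    (3100*x^9 - 29106*x^8 + 136896*x^7 - 343707*x^6 + 457080*x^5 - 291990*x^4
      + 40224*x^3 + 45120*x^2 - 19360*x + 1716) x := by
  unfold fKS
  have h1 := (((((((((((hasDerivAt_pow 10 x).const_mul (310:ℝ)).sub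
      ((hasDerivAt_pow 9 x).const_mul (3234:ℝ))).add
      ((hasDerivAt_pow 8 x).const_mul (17112:ℝ))).sub
      ((hasDerivAt_pow 7 x).const_mul (49101:ℝ))).add
      ((hasDerivAt_pow 6 x).const_mul (76180:ℝ))).sub
      ((hasDerivAt_pow 5 x).const_mul (58398:ℝ))).add
      ((hasDerivAt_pow 4 x).const_mul (10056:ℝ))).add
      ((hasDerivAt_pow 3 x).const_mul (15040:ℝ))).sub
      ((hasDerivAt_pow 2 x).const_mul (9680:ℝ))).add
      ((hasDerivAt_id x).const_mul (1716:ℝ))).sub_const (4:ℝ)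
  refine h1.congr_deriv ?_
  push_cast
  ring

lemma fKS_strictMono : StrictMonoOn fKS (Set.Ici (1.61:ℝ)) := by
  apply strictMonoOn_of_deriv_pos (convex_Ici _)
  · exact fun x _ => (fKS_hasDerivAt x).differentiableAt.continuousAt.continuousWithinAt
  · intro x hx
    rw [interior_Ici] at hx
    rw [(fKS_hasDerivAt x).deriv]
    have h0 : (0:ℝ) ≤ x - 1.61 := by linarith [(Set.mem_Ioi.mp hx).le]
    nlinarith [pow_nonneg h0 2, pow_nonneg h0 3, pow_nonneg h0 4, pow_nonneg h0 5,
      pow_nonneg h0 6, pow_nonneg h0 7, pow_nonneg h0 8, pow_nonneg h0 9]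

theorem stmt_0 :
    (∃! β : ℝ, 1 < β ∧ fKS β = 0) ∧
    (∀ β : ℝ, 1 < β → fKS β = 0 → 1.61 < β ∧ β < 1.63) := by
  have hrange : ∀ β : ℝ, 1 < β → fKS β = 0 → 1.61 < β ∧ β < 1.63 := by
    intro β hβ h0
    constructor
    · by_contra hle
      push_neg at hle
      exact absurd h0 (ne_of_lt (fKS_neg β hβ.le hle))
    · by_contra hge
      push_neg at hge
      exact absurd h0 (ne_of_gt (fKS_pos β hge))
  refine ⟨?_, hrange⟩
  have hcont : ContinuousOn fKS (Set.Icc (1.61:ℝ) 1.63) :=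
    (fun x _ => (fKS_hasDerivAt x).differentiableAt.continuousAt.continuousWithinAt)
  have ha : fKS 1.61 < 0 := fKS_neg 1.61 (by norm_num) le_rfl
  have hb : 0 < fKS 1.63 := fKS_pos 1.63 le_rfl
  have hiv := intermediate_value_Ioo (by norm_num : (1.61:ℝ) ≤ 1.63) hcont
  have h0mem : (0:ℝ) ∈ Set.Ioo (fKS 1.61) (fKS 1.63) := ⟨ha, hb⟩
  obtain ⟨β, hβmem, hβ0⟩ := hiv h0mem
  refine ⟨β, ⟨by linarith [hβmem.1], hβ0⟩, ?_⟩
  intro y ⟨hy1, hy0⟩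
  obtain ⟨hy161, hy163⟩ := hrange y hy1 hy0
  have hβmem' := hβmem
  rcases lt_trichotomy y β with h | h | h
  · have := fKS_strictMono (le_of_lt hy161) (le_of_lt hβmem'.1) h
    rw [hy0, hβ0] at this; exact absurd this (lt_irrefl 0)
  · exact h
  · have := fKS_strictMono (le_of_lt hβmem'.1) (le_of_lt hy161) h
    rw [hy0, hβ0] at this; exact absurd this (lt_irrefl 0)
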